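/- Let V ⊆ ℝ^d be a compact set, w : V → ℝ a nonnegative continuous function with nonempty zero set C = {z ∈ V : w(z) = 0}, δ > 0, and w^δ(y) = min_{z∈V} (w(z) + |y−z|²/(2δ)). If y ∈ V is a point at which w^δ is differentiable, then |Dw^δ(y)| ≤ dist(y, C)/δ. -/

import Mathlib

open Metric Set

/-- The infimal convolution of `w` over `V` with quadratic kernel `|·|²/(2δ)`. -/
noncomputable def infConv {d : ℕ} (V : Set (EuclideanSpace ℝ (Fin d)))
    (w : EuclideanSpace ℝ (Fin d) → ℝ) (δ : ℝ) (y : EuclideanSpace ℝ (Fin d)) : ℝ :=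
  sInf ((fun z => w z + ‖y - z‖ ^ 2 / (2 * δ)) '' V)

theorem stmt_2 {d : ℕ} (V : Set (EuclideanSpace ℝ (Fin d)))
    (hV : IsCompact V)
    (w : EuclideanSpace ℝ (Fin d) → ℝ)
    (hwc : ContinuousOn w V)
    (hw : ∀ y ∈ V, 0 ≤ w y)
    (hC : {z ∈ V | w z = 0}.Nonempty)
    (δ : ℝ) (hδ : 0 < δ)
    (y : EuclideanSpace ℝ (Fin d)) (hy : y ∈ V)
    (hdiff : DifferentiableAt ℝ (infConv V w δ) y) :
    ‖fderiv ℝ (infConv V w δ) y‖ ≤ Metric.infDist y {z ∈ V | w z = 0} / δ := by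
  obtain ⟨z₀, hz₀V, hz₀w⟩ := hC
  have hCne : ({z ∈ V | w z = 0}).Nonempty := ⟨z₀, hz₀V, hz₀w⟩
  have hVne : V.Nonempty := ⟨z₀, hz₀V⟩
  have h2δ : (0:ℝ) < 2 * δ := by linarith
  set f : EuclideanSpace ℝ (Fin d) → EuclideanSpace ℝ (Fin d) → ℝ :=
    fun x u => w u + ‖x - u‖ ^ 2 / (2 * δ) with hf
  have hfnn : ∀ x, ∀ u ∈ V, 0 ≤ f x u := fun x u hu =>
    add_nonneg (hw u hu) (div_nonneg (sq_nonneg _) h2δ.le)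
  have hbdd : ∀ x, BddBelow (f x '' V) := fun x =>
    ⟨0, fun a ⟨u, hu, hau⟩ => hau ▸ hfnn x u hu⟩
  have hle : ∀ x, ∀ u ∈ V, infConv V w δ x ≤ f x u := fun x u hu =>
    csInf_le (hbdd x) ⟨u, hu, rfl⟩
  have hcont : ContinuousOn (f y) V :=
    hwc.add (Continuous.continuousOn (by continuity))
  obtain ⟨z, hzV, hzmin⟩ := hV.exists_isMinOn hVne hcont
  have heq : infConv V w δ y = f y z := by
    refine le_antisymm (hle y z hzV) ?_
    exact le_csInf (hVne.image _) (fun a ⟨u, hu, hau⟩ => hau ▸ isMinOn_iff.mp hzmin u hu)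
  set L := fderiv ℝ (infConv V w δ) y with hL
  have key : ∀ h : EuclideanSpace ℝ (Fin d), L h ≤ inner ℝ (y - z) h / δ := by
    intro h
    have hline : HasDerivAt (fun t : ℝ => y + t • h) h 0 := by
      simpa using ((hasDerivAt_id (0:ℝ)).smul_const h).const_add y
    have hF : HasFDerivAt (infConv V w δ) L (y + (0:ℝ) • h) := by
      simpa using hdiff.hasFDerivAt
    have hφ : HasDerivAt (fun t : ℝ => infConv V w δ (y + t • h)) (L h) 0 :=
      by have := hF.comp_hasDerivAt (x := 0) hline; exact this
    have hslope : Filter.Tendsto (slope (fun t : ℝ => infConv V w δ (y + t • h)) 0)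
        (nhdsWithin 0 (Set.Ioi 0)) (nhds (L h)) :=
      (hasDerivAt_iff_tendsto_slope.mp hφ).mono_left
        (nhdsWithin_mono _ fun t ht => ne_of_gt ht)
    have hg : Filter.Tendsto (fun t : ℝ => inner ℝ (y - z) h / δ + t * ‖h‖ ^ 2 / (2 * δ))
        (nhdsWithin 0 (Set.Ioi 0)) (nhds (inner ℝ (y - z) h / δ)) := by
      have hc2 : Continuous (fun t : ℝ => inner ℝ (y - z) h / δ + t * ‖h‖ ^ 2 / (2 * δ)) := by
        fun_prop
      have h0 := hc2.tendsto 0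
      simpa using h0.mono_left nhdsWithin_le_nhds
    refine le_of_tendsto_of_tendsto hslope hg ?_
    refine eventually_nhdsWithin_of_forall fun t ht => ?_
    have ht' : (0:ℝ) < t := ht
    have h1 : infConv V w δ (y + t • h) ≤
        infConv V w δ y + (t * inner ℝ (y - z) h + t ^ 2 * ‖h‖ ^ 2 / 2) / δ := by
      have h2 := hle (y + t • h) z hzV
      have hexp : ‖y + t • h - z‖ ^ 2
          = ‖y - z‖ ^ 2 + 2 * (t * inner ℝ (y - z) h) + t ^ 2 * ‖h‖ ^ 2 := by
        have he : y + t • h - z = (y - z) + t • h := by abel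
        rw [he, norm_add_sq_real, real_inner_smul_right, norm_smul]
        simp [mul_pow, sq_abs]
        try ring
      rw [heq, hf]
      simp only [hf] at h2
      rw [hexp] at h2
      have : (‖y - z‖ ^ 2 + 2 * (t * inner ℝ (y - z) h) + t ^ 2 * ‖h‖ ^ 2) / (2 * δ)
          = ‖y - z‖ ^ 2 / (2 * δ) + (t * inner ℝ (y - z) h + t ^ 2 * ‖h‖ ^ 2 / 2) / δ := by
        field_simp
        ring
      rw [this] at h2
      linarith
    rw [slope_def_field]
    simp only [zero_smul, add_zero, sub_zero]
    rw [div_le_iff₀ ht']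
    have hexpand : (inner ℝ (y - z) h / δ + t * ‖h‖ ^ 2 / (2 * δ)) * t
        = (t * inner ℝ (y - z) h + t ^ 2 * ‖h‖ ^ 2 / 2) / δ := by
      field_simp
    rw [hexpand]
    linarith
  have hLnorm : ‖L‖ ≤ ‖y - z‖ / δ := by
    refine ContinuousLinearMap.opNorm_le_bound _ (div_nonneg (norm_nonneg _) hδ.le) fun h => ?_
    have hub : ∀ h' : EuclideanSpace ℝ (Fin d), L h' ≤ ‖y - z‖ * ‖h'‖ / δ := by
      intro h'
      refine (key h').trans ?_
      gcongr
      exact real_inner_le_norm _ _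
    rw [Real.norm_eq_abs, abs_le]
    constructor
    · have := hub (-h)
      rw [map_neg, norm_neg] at this
      have : -(‖y - z‖ * ‖h‖ / δ) ≤ L h := by linarith
      calc -(‖y - z‖ / δ * ‖h‖) = -(‖y - z‖ * ‖h‖ / δ) := by ring
        _ ≤ L h := this
    · have := hub h
      calc L h ≤ ‖y - z‖ * ‖h‖ / δ := this
        _ = ‖y - z‖ / δ * ‖h‖ := by ring
  have hz_le : ‖y - z‖ ≤ infDist y {z ∈ V | w z = 0} := by
    rw [infDist_eq_iInf]
    haveI : Nonempty ↑{z | z ∈ V ∧ w z = 0} := hCne.to_subtype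
    refine le_ciInf fun cc => ?_
    obtain ⟨c, hcV, hcw⟩ := cc
    have h2 := hle y c hcV
    rw [heq] at h2
    simp only [hf, hcw, zero_add] at h2
    have hwz := hw z hzV
    have h3 : ‖y - z‖ ^ 2 / (2 * δ) ≤ ‖y - c‖ ^ 2 / (2 * δ) := by linarith
    have hsq : ‖y - z‖ ^ 2 ≤ ‖y - c‖ ^ 2 := by
      calc ‖y - z‖ ^ 2 = ‖y - z‖ ^ 2 / (2 * δ) * (2 * δ) := by field_simp
        _ ≤ ‖y - c‖ ^ 2 / (2 * δ) * (2 * δ) := mul_le_mul_of_nonneg_right h3 h2δ.le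
        _ = ‖y - c‖ ^ 2 := by field_simp
    rw [dist_eq_norm]
    nlinarith [norm_nonneg (y - z), norm_nonneg (y - c)]
  calc ‖L‖ ≤ ‖y - z‖ / δ := hLnorm
    _ ≤ _ := (div_le_div_iff_of_pos_right hδ).mpr hz_le
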